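/- arXiv:1208.1863 — 5 statements merged into one kernel-verified Lean document; each statement's English description precedes it below -/
import Mathlib

section
/- Let $V$ be a normed linear space over $\mathbb{C}$ and $v_1,\ldots,v_n \in V$. Then $\max\{\|\sum_{k=1}^n \alpha_k v_k\| : \alpha_k \in \mathbb{C}, |\alpha_k| = 1\} \leq 2 \max\{\|\sum_{k=1}^n \varepsilon_k v_k\| : \varepsilon_k \in \{-1, 1\}\}$. -/
open Finset

/-- Any `[-1,1]`-coefficient combination is dominated by the best sign combination. -/
lemma sign_dominates (V : Type*) [NormedAddCommGroup V] [NormedSpace ℝ V]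
    (n : ℕ) (v : Fin n → V) :
    ∃ e : Fin n → ℝ, (∀ k, e k = 1 ∨ e k = -1) ∧
      ∀ c : Fin n → ℝ, (∀ k, |c k| ≤ 1) → ‖∑ k, c k • v k‖ ≤ ‖∑ k, e k • v k‖ := by
  classical
  set f : (Fin n → Bool) → ℝ := fun b => ‖∑ k, (if b k then (1:ℝ) else -1) • v k‖ with hf
  obtain ⟨b₀, -, hb₀⟩ := Finset.exists_max_image (Finset.univ : Finset (Fin n → Bool)) f
    ⟨fun _ => true, Finset.mem_univ _⟩
  have claim : ∀ s : Finset (Fin n), ∀ c : Fin n → ℝ, (∀ k, |c k| ≤ 1) →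
      (∀ k ∉ s, c k = 1 ∨ c k = -1) → ‖∑ k, c k • v k‖ ≤ f b₀ := by
    intro s
    induction s using Finset.induction_on with
    | empty =>
      intro c hc hsign
      have heq : ‖∑ k, c k • v k‖ = f (fun k => decide (c k = 1)) := by
        simp only [hf]
        congr 1
        refine Finset.sum_congr rfl fun k _ => ?_
        rcases hsign k (Finset.notMem_empty k) with h | h <;> norm_num [h]
      rw [heq]; exact hb₀ _ (Finset.mem_univ _)
    | @insert a s ha ih =>
      intro c hc hsign
      have hca := abs_le.mp (hc a)
      set t := (c a + 1)/2 with htdef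
      have ht0 : 0 ≤ t := by simp only [htdef]; linarith [hca.1]
      have ht1 : t ≤ 1 := by simp only [htdef]; linarith [hca.2]
      set c1 := Function.update c a 1 with hc1
      set c2 := Function.update c a (-1) with hc2
      have hsum : ∑ k, c k • v k = t • (∑ k, c1 k • v k) + (1-t) • (∑ k, c2 k • v k) := by
        rw [Finset.smul_sum, Finset.smul_sum, ← Finset.sum_add_distrib]
        refine Finset.sum_congr rfl fun k _ => ?_
        rw [smul_smul, smul_smul, ← add_smul]
        congr 1
        by_cases hk : k = a
        · subst hk
          simp only [hc1, hc2, Function.update_self, htdef]; ring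
        · simp only [hc1, hc2, Function.update_of_ne hk]; ring
      have h1 : ‖∑ k, c1 k • v k‖ ≤ f b₀ := by
        refine ih c1 (fun k => ?_) (fun k hk => ?_)
        · by_cases hk : k = a
          · subst hk; simp [hc1]
          · simpa [hc1, Function.update_of_ne hk] using hc k
        · by_cases hka : k = a
          · subst hka; simp [hc1]
          · rw [hc1, Function.update_of_ne hka]
            exact hsign k (by simp [hka, hk])
      have h2 : ‖∑ k, c2 k • v k‖ ≤ f b₀ := by
        refine ih c2 (fun k => ?_) (fun k hk => ?_)
        · by_cases hk : k = a
          · subst hk; simp [hc2]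
          · simpa [hc2, Function.update_of_ne hk] using hc k
        · by_cases hka : k = a
          · subst hka; simp [hc2]
          · rw [hc2, Function.update_of_ne hka]
            exact hsign k (by simp [hka, hk])
      calc ‖∑ k, c k • v k‖
          ≤ t * ‖∑ k, c1 k • v k‖ + (1-t) * ‖∑ k, c2 k • v k‖ := by
            rw [hsum]
            refine (norm_add_le _ _).trans ?_
            rw [norm_smul, norm_smul, Real.norm_eq_abs, Real.norm_eq_abs,
              abs_of_nonneg ht0, abs_of_nonneg (by linarith : (0:ℝ) ≤ 1 - t)]
        _ ≤ t * f b₀ + (1-t) * f b₀ :=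
            add_le_add (mul_le_mul_of_nonneg_left h1 ht0)
              (mul_le_mul_of_nonneg_left h2 (by linarith))
        _ = f b₀ := by ring
  refine ⟨fun k => if b₀ k then 1 else -1, fun k => ?_, fun c hc => ?_⟩
  · by_cases h : b₀ k <;> simp [h]
  · exact claim Finset.univ c hc (fun k hk => absurd (Finset.mem_univ k) hk)

/-- For a complex normed space `V` and vectors `v 1, ..., v n`, the max of
`‖∑ αₖ • vₖ‖` over unimodular `αₖ ∈ ℂ` is at most twice the max of
`‖∑ εₖ • vₖ‖` over signs `εₖ = ±1`. -/
theorem stmt_0 (V : Type*) [NormedAddCommGroup V] [NormedSpace ℂ V]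
    (n : ℕ) (v : Fin n → V) (α : Fin n → ℂ) (hα : ∀ k, ‖α k‖ = 1) :
    ∃ ε : Fin n → ℂ, (∀ k, ε k = 1 ∨ ε k = -1) ∧
      ‖∑ k, α k • v k‖ ≤ 2 * ‖∑ k, ε k • v k‖ := by
  obtain ⟨e, he, hbound⟩ := sign_dominates V n v
  refine ⟨fun k => (e k : ℂ), fun k => ?_, ?_⟩
  · rcases he k with h | h <;> simp [h]
  have hcoe : ∀ (r : ℝ) (x : V), (r : ℂ) • x = r • x := fun r x => by
    rw [Complex.coe_smul]
  have hnorm : ‖∑ k, ((e k : ℂ)) • v k‖ = ‖∑ k, e k • v k‖ := by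
    simp only [hcoe]
  have hsplit : ∑ k, α k • v k =
      (∑ k, (α k).re • v k) + Complex.I • (∑ k, (α k).im • v k) := by
    rw [Finset.smul_sum, ← Finset.sum_add_distrib]
    refine Finset.sum_congr rfl fun k _ => ?_
    conv_lhs => rw [← Complex.re_add_im (α k)]
    rw [add_smul, mul_smul, hcoe, hcoe, smul_comm]
  have hre : ‖∑ k, (α k).re • v k‖ ≤ ‖∑ k, e k • v k‖ := by
    refine hbound _ fun k => ?_
    calc |(α k).re| ≤ ‖α k‖ := Complex.abs_re_le_norm _
      _ = 1 := hα k
  have him : ‖∑ k, (α k).im • v k‖ ≤ ‖∑ k, e k • v k‖ := by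
    refine hbound _ fun k => ?_
    calc |(α k).im| ≤ ‖α k‖ := Complex.abs_im_le_norm _
      _ = 1 := hα k
  rw [hnorm]
  calc ‖∑ k, α k • v k‖
      ≤ ‖∑ k, (α k).re • v k‖ + ‖Complex.I • (∑ k, (α k).im • v k)‖ := by
        rw [hsplit]; exact norm_add_le _ _
    _ = ‖∑ k, (α k).re • v k‖ + ‖∑ k, (α k).im • v k‖ := by
        rw [norm_smul, Complex.norm_I, one_mul]
    _ ≤ ‖∑ k, e k • v k‖ + ‖∑ k, e k • v k‖ := add_le_add hre him
    _ = 2 * ‖∑ k, e k • v k‖ := by ring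
end

section
/- Every finite-dimensional normed linear space has $M$-cotype $1$, i.e., there exists $C > 0$ such that for all $n$ and all $v_1,\ldots,v_n \in V$, $\max\{\|\sum_{k=1}^n \varepsilon_k v_k\| : \varepsilon_k = \pm 1\} \geq C \sum_{k=1}^n \|v_k\|$. -/
/-- Every finite-dimensional real normed space has `M`-cotype `1`. -/
theorem stmt_4 (V : Type*) [NormedAddCommGroup V] [NormedSpace ℝ V]
    [FiniteDimensional ℝ V] :
    ∃ C > (0 : ℝ), ∀ (n : ℕ) (v : Fin n → V),
      ∃ ε : Fin n → ℝ, (∀ k, ε k = 1 ∨ ε k = -1) ∧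
        ‖∑ k, ε k • v k‖ ≥ C * ∑ k, ‖v k‖ := by
  by_cases hV : Subsingleton V
  · refine ⟨1, one_pos, fun n v => ⟨fun _ => 1, fun k => Or.inl rfl, ?_⟩⟩
    have hv : ∀ k, v k = 0 := fun k => Subsingleton.elim _ _
    simp [hv]
  · have : Nontrivial V := not_subsingleton_iff_nontrivial.mp hV
    set d := Module.finrank ℝ V with hd
    have hdpos : 0 < d := Module.finrank_pos
    let b : Module.Basis (Fin d) ℝ V := Module.finBasis ℝ V
    let g : Fin d → V →L[ℝ] ℝ := fun i => LinearMap.toContinuousLinearMap (b.coord i)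
    set B : ℝ := 1 + ∑ i, ‖b i‖ with hB
    set G : ℝ := 1 + ∑ i, ‖g i‖ with hG
    have hBpos : 0 < B := by positivity
    have hGpos : 0 < G := by positivity
    have hbB : ∀ i, ‖b i‖ ≤ B := by
      intro i
      have h1 : ‖b i‖ ≤ ∑ j, ‖b j‖ :=
        Finset.single_le_sum (f := fun j => ‖b j‖) (fun j _ => norm_nonneg _)
          (Finset.mem_univ i)
      linarith
    have hgG : ∀ i, ‖g i‖ ≤ G := by
      intro i
      have h1 : ‖g i‖ ≤ ∑ j, ‖g j‖ :=
        Finset.single_le_sum (f := fun j => ‖g j‖) (fun j _ => norm_nonneg _)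
          (Finset.mem_univ i)
      linarith
    have hnorm : ∀ v : V, ‖v‖ ≤ B * ∑ i, |g i v| := by
      intro v
      calc ‖v‖ = ‖∑ i, b.repr v i • b i‖ := by rw [b.sum_repr v]
        _ ≤ ∑ i, ‖b.repr v i • b i‖ := norm_sum_le _ _
        _ = ∑ i, |b.repr v i| * ‖b i‖ := by
            simp [norm_smul, Real.norm_eq_abs]
        _ ≤ ∑ i, |g i v| * B := by
            refine Finset.sum_le_sum fun i _ => ?_
            have hgi : g i v = b.repr v i := by
              simp [g, Module.Basis.coord_apply]
            rw [hgi]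
            exact mul_le_mul_of_nonneg_left (hbB i) (abs_nonneg _)
        _ = B * ∑ i, |g i v| := by rw [← Finset.sum_mul, mul_comm]
    refine ⟨1 / (B * G * d), by positivity, fun n v => ?_⟩
    -- pigeonhole: some coordinate i has large total mass
    have hsum : ∑ k, ‖v k‖ ≤ B * ∑ i, ∑ k, |g i (v k)| := by
      calc ∑ k, ‖v k‖ ≤ ∑ k, B * ∑ i, |g i (v k)| :=
            Finset.sum_le_sum fun k _ => hnorm (v k)
        _ = B * ∑ k, ∑ i, |g i (v k)| := by rw [Finset.mul_sum]
        _ = B * ∑ i, ∑ k, |g i (v k)| := by rw [Finset.sum_comm]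
    have hd' : (0:ℝ) < d := by exact_mod_cast hdpos
    have hex : ∃ i ∈ (Finset.univ : Finset (Fin d)),
        (∑ k, ‖v k‖) / (B * d) ≤ ∑ k, |g i (v k)| := by
      haveI : Nonempty (Fin d) := Fin.pos_iff_nonempty.mp hdpos
      refine Finset.exists_le_of_sum_le Finset.univ_nonempty ?_
      simp only [Finset.sum_const, Finset.card_univ, Fintype.card_fin, nsmul_eq_mul]
      have heq : (d:ℝ) * ((∑ k, ‖v k‖) / (B * d)) = (∑ k, ‖v k‖) / B := by
        field_simp
      rw [heq, div_le_iff₀ hBpos]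
      linarith [hsum]
    obtain ⟨i, _, hi⟩ := hex
    set ε : Fin n → ℝ := fun k => if 0 ≤ g i (v k) then 1 else -1 with hε
    have hεsign : ∀ k, ε k * g i (v k) = |g i (v k)| := by
      intro k
      by_cases h : 0 ≤ g i (v k)
      · simp [hε, h, abs_of_nonneg h]
      · push_neg at h
        simp [hε, not_le.mpr h, abs_of_neg h]
    refine ⟨ε, fun k => by by_cases h : 0 ≤ g i (v k) <;> simp [hε, h], ?_⟩
    have hgi : g i (∑ k, ε k • v k) = ∑ k, |g i (v k)| := by
      rw [map_sum]
      refine Finset.sum_congr rfl fun k _ => ?_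
      rw [map_smul, smul_eq_mul, hεsign k]
    have hle : ∑ k, |g i (v k)| ≤ G * ‖∑ k, ε k • v k‖ := by
      rw [← hgi]
      calc g i (∑ k, ε k • v k) ≤ |g i (∑ k, ε k • v k)| := le_abs_self _
        _ ≤ ‖g i‖ * ‖∑ k, ε k • v k‖ := (g i).le_opNorm _
        _ ≤ G * ‖∑ k, ε k • v k‖ :=
            mul_le_mul_of_nonneg_right (hgG i) (norm_nonneg _)
    have hd' : (0:ℝ) < d := by exact_mod_cast hdpos
    have key : (∑ k, ‖v k‖) / (B * d) ≤ G * ‖∑ k, ε k • v k‖ := hi.trans hle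
    rw [ge_iff_le, div_mul_eq_mul_div, one_mul, div_le_iff₀ (by positivity)]
    rw [div_le_iff₀ (by positivity)] at key
    nlinarith [key, norm_nonneg (∑ k, ε k • v k)]
end

section
/- Let $X_1,\ldots,X_n$, $Y$ be normed linear spaces and $A_k \in \mathcal{B}(X_k, Y)$. Suppose $Y$ has $M$-cotype $\rho \in [1,\infty)$ with constant $C > 0$. Let $q \in [\rho, \infty]$ and define $r \in [\rho,\infty]$ by $1/q + 1/r = 1/\rho$. Define $B : \ell_q(X_1,\ldots,X_n) \to Y$ by $B(x_1,\ldots,x_n) = \sum_{k=1}^n A_k x_k$. Then $\|B\| \geq C \|(\|A_1\|,\ldots,\|A_n\|)\|_r$. -/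
open scoped ENNReal

/-- Coordinatewise norm domination implies PiLp norm domination. -/
lemma pilp_norm_le_pilp_norm {p : ℝ≥0∞} [Fact (1 ≤ p)] {n : ℕ} {α β : Fin n → Type*}
    [∀ i, SeminormedAddCommGroup (α i)] [∀ i, SeminormedAddCommGroup (β i)]
    (x : PiLp p α) (y : PiLp p β) (h : ∀ i, ‖x i‖ ≤ ‖y i‖) : ‖x‖ ≤ ‖y‖ := by
  rcases eq_or_ne p ∞ with hp | hp
  · subst hp
    rw [PiLp.norm_eq_ciSup, PiLp.norm_eq_ciSup]
    exact ciSup_mono (Set.Finite.bddAbove (Set.finite_range _)) h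
  · have hp0 : 0 < p.toReal :=
      ENNReal.toReal_pos (lt_of_lt_of_le one_pos (Fact.out : 1 ≤ p)).ne' hp
    rw [PiLp.norm_eq_sum hp0, PiLp.norm_eq_sum hp0]
    apply Real.rpow_le_rpow (by positivity)
      (Finset.sum_le_sum fun i _ => Real.rpow_le_rpow (norm_nonneg _) (h i) hp0.le)
      (by positivity)

lemma key_ineq (𝕜 : Type*) [RCLike 𝕜] (n : ℕ) (X : Fin n → Type*)
    [∀ k, NormedAddCommGroup (X k)] [∀ k, NormedSpace 𝕜 (X k)]
    (Y : Type*) [NormedAddCommGroup Y] [NormedSpace 𝕜 Y]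
    (A : ∀ k, X k →L[𝕜] Y)
    (ρ : ℝ) (hρ : 1 ≤ ρ) (C : ℝ) (hC : 0 < C)
    (hcotype : ∀ (m : ℕ) (v : Fin m → Y),
      ∃ ε : Fin m → 𝕜, (∀ j, ε j = 1 ∨ ε j = -1) ∧
        ‖∑ j, ε j • v j‖ ≥ C * (∑ j, ‖v j‖ ^ ρ) ^ (1 / ρ))
    (q : ℝ≥0∞) [Fact (1 ≤ q)]
    (B : PiLp q X →L[𝕜] Y)
    (hB : ∀ x : PiLp q X, B x = ∑ k, A k (x k))
    (t c : Fin n → ℝ) (ht : ∀ k, 0 ≤ t k) (hc : ∀ k, 0 ≤ c k)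
    (hct : ∀ k, c k < t k * ‖A k‖ ∨ c k = 0) :
    C * (∑ k, c k ^ ρ) ^ (1/ρ) ≤ ‖B‖ * ‖(WithLp.equiv q (Fin n → ℝ)).symm t‖ := by
  classical
  have hρ0 : (0:ℝ) < ρ := lt_of_lt_of_le one_pos hρ
  have hu : ∀ k, ∃ u : X k, ‖u‖ ≤ 1 ∧ c k ≤ t k * ‖A k u‖ := by
    intro k
    rcases hct k with h | h
    · have htk : 0 < t k := by
        rcases (ht k).lt_or_eq with h' | h'
        · exact h'
        · exfalso; rw [← h', zero_mul] at h; exact absurd h (not_lt.2 (hc k))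
      have hlt : c k / t k < ‖A k‖ := (div_lt_iff₀ htk).2 (by rw [mul_comm]; exact h)
      obtain ⟨u, hu1, hu2⟩ := (A k).exists_lt_apply_of_lt_opNorm hlt
      exact ⟨u, hu1.le, le_of_lt (by rw [mul_comm]; exact (div_lt_iff₀ htk).1 hu2)⟩
    · exact ⟨0, by simp, by rw [h]; exact mul_nonneg (ht k) (norm_nonneg _)⟩
  choose u hu1 hu2 using hu
  obtain ⟨ε, hε, hεnorm⟩ := hcotype n (fun k => ((t k : 𝕜)) • A k (u k))
  have hε1 : ∀ k, ‖ε k‖ = 1 := by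
    intro k; rcases hε k with h | h <;> simp [h]
  set x : PiLp q X := (WithLp.equiv q (∀ k, X k)).symm (fun k => (ε k * (t k : 𝕜)) • u k)
    with hxdef
  have hxk : ∀ k, x k = (ε k * (t k : 𝕜)) • u k := fun k => rfl
  have hBx : B x = ∑ j, ε j • ((t j : 𝕜)) • A j (u j) := by
    rw [hB]
    exact Finset.sum_congr rfl fun k _ => by rw [hxk, map_smul, mul_smul]
  have hnormv : ∀ k, c k ≤ ‖((t k : 𝕜)) • A k (u k)‖ := by
    intro k
    rw [norm_smul, RCLike.norm_ofReal, abs_of_nonneg (ht k)]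
    exact hu2 k
  have hxnorm : ‖x‖ ≤ ‖(WithLp.equiv q (Fin n → ℝ)).symm t‖ := by
    apply pilp_norm_le_pilp_norm
    intro k
    rw [hxk, WithLp.equiv_symm_apply, PiLp.toLp_apply, norm_smul, norm_mul, hε1, RCLike.norm_ofReal,
      Real.norm_eq_abs, one_mul]
    calc |t k| * ‖u k‖ ≤ |t k| * 1 := mul_le_mul_of_nonneg_left (hu1 k) (abs_nonneg _)
      _ = |t k| := mul_one _
  calc C * (∑ k, c k ^ ρ) ^ (1/ρ)
      ≤ C * (∑ k, ‖((t k : 𝕜)) • A k (u k)‖ ^ ρ) ^ (1/ρ) := by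
        apply mul_le_mul_of_nonneg_left _ hC.le
        exact Real.rpow_le_rpow (Finset.sum_nonneg fun k _ => Real.rpow_nonneg (hc k) _)
          (Finset.sum_le_sum fun k _ =>
            Real.rpow_le_rpow (hc k) (hnormv k) hρ0.le) (by positivity)
    _ ≤ ‖∑ j, ε j • ((t j : 𝕜)) • A j (u j)‖ := hεnorm
    _ = ‖B x‖ := by rw [hBx]
    _ ≤ ‖B‖ * ‖x‖ := B.le_opNorm x
    _ ≤ ‖B‖ * ‖(WithLp.equiv q (Fin n → ℝ)).symm t‖ :=
        mul_le_mul_of_nonneg_left hxnorm (norm_nonneg B)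
/-- Main lemma: if `Y` has `M`-cotype `ρ` with constant `C`,
`1/q + 1/r = 1/ρ` with `q ∈ [ρ, ∞]`, and `B : ℓ_q(X₁,…,Xₙ) → Y` is given by
`B (x₁,…,xₙ) = ∑ Aₖ xₖ`, then `‖B‖ ≥ C * ‖(‖A₁‖,…,‖Aₙ‖)‖_r`. -/
theorem stmt_8 (𝕜 : Type*) [RCLike 𝕜] (n : ℕ) (X : Fin n → Type*)
    [∀ k, NormedAddCommGroup (X k)] [∀ k, NormedSpace 𝕜 (X k)]
    (Y : Type*) [NormedAddCommGroup Y] [NormedSpace 𝕜 Y]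
    (A : ∀ k, X k →L[𝕜] Y)
    (ρ : ℝ) (hρ : 1 ≤ ρ) (C : ℝ) (hC : 0 < C)
    (hcotype : ∀ (m : ℕ) (v : Fin m → Y),
      ∃ ε : Fin m → 𝕜, (∀ j, ε j = 1 ∨ ε j = -1) ∧
        ‖∑ j, ε j • v j‖ ≥ C * (∑ j, ‖v j‖ ^ ρ) ^ (1 / ρ))
    (q r : ℝ≥0∞) [Fact (1 ≤ q)] [Fact (1 ≤ r)]
    (hq : ENNReal.ofReal ρ ≤ q) (hqr : 1 / q + 1 / r = 1 / ENNReal.ofReal ρ)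
    (B : PiLp q X →L[𝕜] Y)
    (hB : ∀ x : PiLp q X, B x = ∑ k, A k (x k)) :
    ‖B‖ ≥ C * ‖(WithLp.equiv r (Fin n → ℝ)).symm (fun k => ‖A k‖)‖ := by
  classical
  have hρ0 : (0:ℝ) < ρ := lt_of_lt_of_le one_pos hρ
  have hρne : ρ ≠ 0 := hρ0.ne'
  have hq1 : (1:ℝ≥0∞) ≤ q := Fact.out
  have hr1 : (1:ℝ≥0∞) ≤ r := Fact.out
  have hq0 : q ≠ 0 := (lt_of_lt_of_le one_pos hq1).ne'
  have hr0 : r ≠ 0 := (lt_of_lt_of_le one_pos hr1).ne'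
  set N := ‖(WithLp.equiv r (Fin n → ℝ)).symm (fun k => ‖A k‖)‖ with hNdef
  rw [ge_iff_le]
  have hT : ∃ t : Fin n → ℝ, (∀ k, 0 ≤ t k) ∧
      ‖(WithLp.equiv q (Fin n → ℝ)).symm t‖ ≤ 1 ∧
      N ≤ (∑ k, (t k * ‖A k‖) ^ ρ) ^ (1/ρ) := by
    by_cases hqtop : q = ∞
    · -- q = ∞, r = ofReal ρ
      subst hqtop
      have hr' : r = ENNReal.ofReal ρ := by
        have h := hqr
        simp only [ENNReal.div_top, zero_add] at h
        simpa using congrArg (·⁻¹) (by simpa [one_div] using h : r⁻¹ = (ENNReal.ofReal ρ)⁻¹)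
      subst hr'
      have hrr : (ENNReal.ofReal ρ).toReal = ρ := ENNReal.toReal_ofReal hρ0.le
      have hrr0 : 0 < (ENNReal.ofReal ρ).toReal := by rw [hrr]; exact hρ0
      refine ⟨fun _ => 1, fun _ => zero_le_one, ?_, ?_⟩
      · rw [PiLp.norm_eq_ciSup]
        exact Real.iSup_le (fun k => by simp [WithLp.equiv_symm_apply, PiLp.toLp_apply]) zero_le_one
      · rw [hNdef, PiLp.norm_eq_sum hrr0]
        apply le_of_eq
        rw [hrr]
        congr 1
        exact Finset.sum_congr rfl fun k _ => by
          simp [WithLp.equiv_symm_apply, PiLp.toLp_apply, abs_of_nonneg (norm_nonneg (A k))]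
    · -- q ≠ ∞
      have hqr0 : 0 < q.toReal := ENNReal.toReal_pos hq0 hqtop
      by_cases hrtop : r = ∞
      · -- r = ∞, q = ofReal ρ
        subst hrtop
        have hq' : q = ENNReal.ofReal ρ := by
          have h := hqr
          simp only [ENNReal.div_top, add_zero] at h
          simpa using congrArg (·⁻¹) (by simpa [one_div] using h : q⁻¹ = (ENNReal.ofReal ρ)⁻¹)
        have hqrρ : q.toReal = ρ := by rw [hq']; exact ENNReal.toReal_ofReal hρ0.le
        rcases isEmpty_or_nonempty (Fin n) with hn | hn
        · refine ⟨fun _ => 0, fun _ => le_rfl, ?_, ?_⟩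
          · rw [PiLp.norm_eq_sum hqr0, Finset.univ_eq_empty, Finset.sum_empty,
              Real.zero_rpow (by positivity)]
            norm_num
          · have hN : N = 0 := by
              rw [hNdef, PiLp.norm_eq_ciSup, Real.iSup_of_isEmpty]
            rw [hN]
            positivity
        · obtain ⟨k₀, hk₀⟩ := Finite.exists_max (fun k => ‖A k‖)
          refine ⟨fun k => if k = k₀ then 1 else 0, fun k => by dsimp; split <;> norm_num,
            ?_, ?_⟩
          · rw [PiLp.norm_eq_sum hqr0]
            have : ∀ k : Fin n,
                ‖((WithLp.equiv q (Fin n → ℝ)).symm (fun k => if k = k₀ then (1:ℝ) else 0)) k‖ ^ q.toReal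
                  = if k = k₀ then 1 else 0 := by
              intro k
              rw [WithLp.equiv_symm_apply, PiLp.toLp_apply]
              split <;> simp [Real.zero_rpow hqr0.ne']
            rw [Finset.sum_congr rfl fun k _ => this k]
            simp [Real.one_rpow]
          · show N ≤ (∑ k, ((if k = k₀ then (1:ℝ) else 0) * ‖A k‖) ^ ρ) ^ (1/ρ)
            have hterm : ∀ k : Fin n, ((if k = k₀ then (1:ℝ) else 0) * ‖A k‖) ^ ρ
                = if k = k₀ then ‖A k₀‖ ^ ρ else 0 := by
              intro k
              rcases eq_or_ne k k₀ with h | h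
              · subst h; simp
              · simp [h, Real.zero_rpow hρne]
            have hsum : (∑ k, ((if k = k₀ then (1:ℝ) else 0) * ‖A k‖) ^ ρ) = ‖A k₀‖ ^ ρ := by
              rw [Finset.sum_congr rfl fun k _ => hterm k, Finset.sum_ite_eq']
              simp
            rw [hsum, one_div, Real.rpow_rpow_inv (norm_nonneg _) hρne, hNdef,
              PiLp.norm_eq_ciSup]
            exact Real.iSup_le (fun k => by
              simpa [WithLp.equiv_symm_apply, PiLp.toLp_apply,
                abs_of_nonneg (norm_nonneg (A k))] using hk₀ k) (norm_nonneg _)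
      · -- both finite
        have hrr0 : 0 < r.toReal := ENNReal.toReal_pos hr0 hrtop
        have heq : 1/q.toReal + 1/r.toReal = 1/ρ := by
          have h1 : (1/q + 1/r).toReal = (1/(ENNReal.ofReal ρ)).toReal := by rw [hqr]
          rw [ENNReal.toReal_add (by simp [one_div, ENNReal.inv_ne_top, hq0])
            (by simp [one_div, ENNReal.inv_ne_top, hr0])] at h1
          simpa [one_div, ENNReal.toReal_inv, ENNReal.toReal_ofReal hρ0.le] using h1
        have hqne : q.toReal ≠ 0 := hqr0.ne'
        have hrne : r.toReal ≠ 0 := hrr0.ne'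
        set S := ∑ k, ‖A k‖ ^ r.toReal with hSdef
        have hS0 : 0 ≤ S := Finset.sum_nonneg fun k _ => Real.rpow_nonneg (norm_nonneg _) _
        have hN : N = S ^ (1/r.toReal) := by
          rw [hNdef, PiLp.norm_eq_sum hrr0, hSdef]
          congr 1
          exact Finset.sum_congr rfl fun k _ => by
            simp [WithLp.equiv_symm_apply, PiLp.toLp_apply, abs_of_nonneg (norm_nonneg (A k))]
        rcases hS0.eq_or_lt with hS | hSpos
        · refine ⟨fun _ => 0, fun _ => le_rfl, ?_, ?_⟩
          · rw [PiLp.norm_eq_sum hqr0]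
            have hz : ∀ k : Fin n,
                ‖((WithLp.equiv q (Fin n → ℝ)).symm (fun _ => (0:ℝ))) k‖ ^ q.toReal = 0 :=
              fun k => by simp [WithLp.equiv_symm_apply, PiLp.toLp_apply, Real.zero_rpow hqne]
            rw [Finset.sum_congr rfl fun k _ => hz k, Finset.sum_const_zero,
              Real.zero_rpow (by positivity)]
            norm_num
          · rw [hN, ← hS, Real.zero_rpow (by positivity)]
            positivity
        · set t : Fin n → ℝ := fun k => ‖A k‖ ^ (r.toReal / q.toReal) / S ^ (1/q.toReal)
            with htdef
          have ht0 : ∀ k, 0 ≤ t k := fun k => by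
            rw [htdef]; positivity
          have hkey : (r.toReal / q.toReal + 1) * ρ = r.toReal := by
            field_simp at heq ⊢
            nlinarith [heq]
          refine ⟨t, ht0, ?_, ?_⟩
          · rw [PiLp.norm_eq_sum hqr0]
            have hterm : ∀ k : Fin n,
                ‖((WithLp.equiv q (Fin n → ℝ)).symm t) k‖ ^ q.toReal
                  = ‖A k‖ ^ r.toReal / S := by
              intro k
              rw [WithLp.equiv_symm_apply, PiLp.toLp_apply, Real.norm_eq_abs, abs_of_nonneg (ht0 k), htdef]
              rw [Real.div_rpow (Real.rpow_nonneg (norm_nonneg _) _) (Real.rpow_nonneg hS0 _),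
                ← Real.rpow_mul (norm_nonneg _), ← Real.rpow_mul hS0,
                div_mul_cancel₀ _ hqne, one_div_mul_cancel hqne, Real.rpow_one]
            rw [Finset.sum_congr rfl fun k _ => hterm k, ← Finset.sum_div, ← hSdef,
              div_self hSpos.ne', Real.one_rpow]
          · refine le_of_eq ?_
            have hterm2 : ∀ k : Fin n,
                (t k * ‖A k‖) ^ ρ = ‖A k‖ ^ r.toReal / S ^ (1/q.toReal * ρ) := by
              intro k
              rw [htdef]
              have h1 : ‖A k‖ ^ (r.toReal / q.toReal) / S ^ (1/q.toReal) * ‖A k‖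
                  = ‖A k‖ ^ (r.toReal / q.toReal + 1) / S ^ (1/q.toReal) := by
                rw [Real.rpow_add' (norm_nonneg _) (by positivity), Real.rpow_one]
                ring
              rw [h1, Real.div_rpow (Real.rpow_nonneg (norm_nonneg _) _)
                  (Real.rpow_nonneg hS0 _),
                ← Real.rpow_mul (norm_nonneg _), ← Real.rpow_mul hS0, hkey]
            have h2 : S / S ^ (1/q.toReal * ρ) = S ^ (1 - 1/q.toReal * ρ) := by
              rw [Real.rpow_sub hSpos, Real.rpow_one]
            have h3 : (1 - 1/q.toReal * ρ) * (1/ρ) = 1/r.toReal := by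
              field_simp at heq ⊢
              nlinarith [heq]
            rw [Finset.sum_congr rfl fun k _ => hterm2 k, ← Finset.sum_div, ← hSdef, h2,
              ← Real.rpow_mul hS0, h3, hN]
  obtain ⟨t, ht0, ht1, htN⟩ := hT
  have hN0 : 0 ≤ N := norm_nonneg _
  have hB0 : 0 ≤ ‖B‖ := norm_nonneg _
  have main : ∀ l : ℝ, 0 < l → l < 1 → C * l * N ≤ ‖B‖ := by
    intro l hl0 hl1
    have hct : ∀ k, l * (t k * ‖A k‖) < t k * ‖A k‖ ∨ l * (t k * ‖A k‖) = 0 := by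
      intro k
      rcases (mul_nonneg (ht0 k) (norm_nonneg (A k))).lt_or_eq with h | h
      · exact Or.inl (by nlinarith)
      · exact Or.inr (by rw [← h, mul_zero])
    have key := key_ineq 𝕜 n X Y A ρ hρ C hC hcotype q B hB t
      (fun k => l * (t k * ‖A k‖)) ht0
      (fun k => mul_nonneg hl0.le (mul_nonneg (ht0 k) (norm_nonneg _))) hct
    have hsum : (∑ k, (l * (t k * ‖A k‖)) ^ ρ) ^ (1/ρ)
        = l * (∑ k, (t k * ‖A k‖) ^ ρ) ^ (1/ρ) := by
      have h1 : ∀ k : Fin n, (l * (t k * ‖A k‖)) ^ ρ = l ^ ρ * (t k * ‖A k‖) ^ ρ :=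
        fun k => Real.mul_rpow hl0.le (mul_nonneg (ht0 k) (norm_nonneg _))
      rw [Finset.sum_congr rfl fun k _ => h1 k, ← Finset.mul_sum,
        Real.mul_rpow (by positivity)
          (Finset.sum_nonneg fun k _ => Real.rpow_nonneg
            (mul_nonneg (ht0 k) (norm_nonneg _)) _),
        one_div, Real.rpow_rpow_inv hl0.le hρne]
    calc C * l * N ≤ C * l * (∑ k, (t k * ‖A k‖) ^ ρ) ^ (1/ρ) := by
          apply mul_le_mul_of_nonneg_left htN (by positivity)
      _ = C * ((∑ k, (l * (t k * ‖A k‖)) ^ ρ) ^ (1/ρ)) := by rw [hsum]; ring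
      _ ≤ ‖B‖ * ‖(WithLp.equiv q (Fin n → ℝ)).symm t‖ := key
      _ ≤ ‖B‖ * 1 := mul_le_mul_of_nonneg_left ht1 hB0
      _ = ‖B‖ := mul_one _
  rcases hN0.eq_or_lt with h0 | hNpos
  · rw [← h0, mul_zero]; exact hB0
  · refine le_of_forall_lt fun d hd => ?_
    rcases lt_or_ge d 0 with hd0 | hd0
    · exact lt_of_lt_of_le hd0 hB0
    · have hCN : 0 < C * N := mul_pos hC hNpos
      have hdl : d / (C * N) < 1 := (div_lt_one hCN).2 hd
      have hdn : 0 ≤ d / (C * N) := div_nonneg hd0 hCN.le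
      set l := (d / (C * N) + 1) / 2 with hl
      have hl0 : 0 < l := by rw [hl]; linarith
      have hl1 : l < 1 := by rw [hl]; linarith
      have : d / (C * N) < l := by rw [hl]; linarith
      have hdlt : d < C * l * N := by
        have := (div_lt_iff₀ hCN).1 this
        nlinarith
      exact lt_of_lt_of_le hdlt (main l hl0 hl1)
end

section
/- Let $X$ be a Banach space whose dual $X^*$ has $M$-cotype $\rho \in [1,\infty)$, let $Y_k$ be normed spaces and $A_k \in \mathcal{B}(X, Y_k)$ for $k \geq 1$. Let $p \in [1, \rho/(\rho-1)]$ and define $r$ by $1/p - 1/r = 1 - 1/\rho$. If the sequence $(\|A_1\|, \|A_2\|, \ldots) \notin \ell_r$, then the set $\mathcal{D}_p = \{x \in X : (\|A_1 x\|, \|A_2 x\|, \ldots) \notin \ell_p\}$ is dense in $X$. -/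
open scoped ENNReal


/-- domination for real sequences -/
lemma aux_memℓp_mono {p : ℝ≥0∞} {f g : ℕ → ℝ} (hg : Memℓp g p) (h : ∀ k, |f k| ≤ g k) :
    Memℓp f p := by
  have hgnn : ∀ k, 0 ≤ g k := fun k => le_trans (abs_nonneg _) (h k)
  rcases p.trichotomy with (rfl | rfl | hp)
  · refine memℓp_zero (hg.finite_dsupport.subset fun k hk => ?_)
    simp only [Set.mem_setOf_eq] at hk ⊢
    intro h0
    have := h k
    rw [h0] at this
    exact hk (abs_nonpos_iff.mp this)
  · obtain ⟨M, hM⟩ := hg.bddAbove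
    refine memℓp_infty ⟨M, ?_⟩
    rintro x ⟨k, rfl⟩
    calc ‖f k‖ = |f k| := Real.norm_eq_abs _
      _ ≤ g k := h k
      _ = ‖g k‖ := (Real.norm_of_nonneg (hgnn k)).symm
      _ ≤ M := hM ⟨k, rfl⟩
  · refine memℓp_gen (Summable.of_nonneg_of_le (fun k => Real.rpow_nonneg (norm_nonneg _) _)
      (fun k => ?_) (hg.summable hp))
    refine Real.rpow_le_rpow (norm_nonneg _) ?_ hp.le
    calc ‖f k‖ = |f k| := Real.norm_eq_abs _
      _ ≤ g k := h k
      _ = ‖g k‖ := (Real.norm_of_nonneg (hgnn k)).symm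

lemma aux_sum_equivFin {M : Type*} [AddCommMonoid M] (F : Finset ℕ) (f : ℕ → M) :
    ∑ k ∈ F, f k = ∑ j : Fin F.card, f (F.equivFin.symm j) := by
  rw [← Finset.sum_attach F f]
  exact Fintype.sum_equiv F.equivFin _ _ (fun x => by simp)

lemma aux_cotype {𝕜 X : Type*} [RCLike 𝕜] [NormedAddCommGroup X] [NormedSpace 𝕜 X]
    {ρ C : ℝ}
    (hco : ∀ (m : ℕ) (v : Fin m → StrongDual 𝕜 X),
      ∃ ε : Fin m → 𝕜, (∀ j, ε j = 1 ∨ ε j = -1) ∧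
        ‖∑ j, ε j • v j‖ ≥ C * (∑ j, ‖v j‖ ^ ρ) ^ (1 / ρ))
    (F : Finset ℕ) (w : ℕ → StrongDual 𝕜 X) :
    ∃ ε : ℕ → 𝕜, (∀ k, ‖ε k‖ = 1) ∧
      C * (∑ k ∈ F, ‖w k‖ ^ ρ) ^ (1 / ρ) ≤ ‖∑ k ∈ F, ε k • w k‖ := by
  obtain ⟨ε₀, hε₀, h⟩ := hco F.card (fun j => w (F.equivFin.symm j))
  have hnorm : ∀ j, ‖ε₀ j‖ = 1 := by
    intro j; rcases hε₀ j with h1 | h1 <;> simp [h1]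
  refine ⟨fun k => if hk : k ∈ F then ε₀ (F.equivFin ⟨k, hk⟩) else 1, fun k => ?_, ?_⟩
  · dsimp only; split
    · exact hnorm _
    · exact norm_one
  · beta_reduce
    have e2 : ∑ k ∈ F, (if hk : k ∈ F then ε₀ (F.equivFin ⟨k, hk⟩) else 1) • w k
        = ∑ j : Fin F.card, ε₀ j • w (F.equivFin.symm j) := by
      rw [aux_sum_equivFin F (fun k => (if hk : k ∈ F then ε₀ (F.equivFin ⟨k, hk⟩) else 1) • w k)]
      apply Finset.sum_congr rfl
      intro j _
      have hmem : ((F.equivFin.symm j : F) : ℕ) ∈ F := (F.equivFin.symm j).2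
      rw [dif_pos hmem]
      congr 2
      simp
    rw [e2, aux_sum_equivFin F (fun k => ‖w k‖ ^ ρ)]
    exact h

lemma aux_phi {𝕜 X Yk : Type*} [RCLike 𝕜] [NormedAddCommGroup X] [NormedSpace 𝕜 X]
    [NormedAddCommGroup Yk] [NormedSpace 𝕜 Yk] (T : X →L[𝕜] Yk) :
    ∃ φ : StrongDual 𝕜 X, (∀ x, ‖φ x‖ ≤ ‖T x‖) ∧ ‖T‖ / 2 ≤ ‖φ‖ := by
  by_cases hT : ‖T‖ = 0
  · exact ⟨0, fun x => by simpa using norm_nonneg _, by simp [hT]⟩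
  · have hT0 : 0 < ‖T‖ := lt_of_le_of_ne (norm_nonneg _) (Ne.symm hT)
    obtain ⟨x, hx1, hx2⟩ := T.exists_lt_apply_of_lt_opNorm (show ‖T‖ / 2 < ‖T‖ by linarith)
    have hTx : T x ≠ 0 := by
      intro h0
      rw [h0, norm_zero] at hx2
      linarith
    obtain ⟨g, hg1, hg2⟩ := exists_dual_vector 𝕜 (T x) (norm_ne_zero_iff.mpr hTx)
    refine ⟨g.comp T, fun y => ?_, ?_⟩
    · calc ‖g (T y)‖ ≤ ‖g‖ * ‖T y‖ := g.le_opNorm _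
        _ = ‖T y‖ := by rw [hg1, one_mul]
    · have e1 : ‖(g.comp T) x‖ = ‖T x‖ := by
        rw [ContinuousLinearMap.comp_apply, hg2]
        simp [RCLike.norm_ofReal, abs_of_nonneg (norm_nonneg _)]
      have e2 : ‖(g.comp T) x‖ ≤ ‖g.comp T‖ := by
        calc ‖(g.comp T) x‖ ≤ ‖g.comp T‖ * ‖x‖ := (g.comp T).le_opNorm x
          _ ≤ ‖g.comp T‖ * 1 := by
              exact mul_le_mul_of_nonneg_left hx1.le (norm_nonneg _)
          _ = ‖g.comp T‖ := mul_one _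
      linarith [e1 ▸ e2, hx2]

lemma aux_all {𝕜 X : Type*} [RCLike 𝕜] [NormedAddCommGroup X] [NormedSpace 𝕜 X]
    {Y : ℕ → Type*} [∀ k, NormedAddCommGroup (Y k)] [∀ k, NormedSpace 𝕜 (Y k)]
    (A : ∀ k, X →L[𝕜] Y k) {p : ℝ≥0∞}
    (hnd : ¬ Dense {x : X | ¬ Memℓp (fun k => ‖A k x‖) p}) (z : X) :
    Memℓp (fun k => ‖A k z‖) p := by
  rw [dense_iff_inter_open] at hnd
  push_neg at hnd
  obtain ⟨U, hUo, hUne, hU⟩ := hnd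
  have hmem : ∀ x ∈ U, Memℓp (fun k => ‖A k x‖) p := by
    intro x hx
    by_contra hc
    rw [Set.eq_empty_iff_forall_notMem] at hU
    exact hU x ⟨hx, hc⟩
  obtain ⟨x₀, hx₀⟩ := hUne
  obtain ⟨δ, hδ, hball⟩ := Metric.isOpen_iff.mp hUo x₀ hx₀
  set c : ℝ := δ / (2 * (‖z‖ + 1)) with hcdef
  have hc0 : 0 < c := by positivity
  have hceq : c * (‖z‖ + 1) = δ / 2 := by
    rw [hcdef]; field_simp
  have hcz : ‖(c : 𝕜) • z‖ < δ := by
    rw [norm_smul, RCLike.norm_ofReal, abs_of_pos hc0]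
    have : c * ‖z‖ ≤ c * (‖z‖ + 1) := by nlinarith
    linarith
  have h1 : Memℓp (fun k => ‖A k (x₀ + (c : 𝕜) • z)‖) p := by
    refine hmem _ (hball ?_)
    rw [Metric.mem_ball, dist_eq_norm]
    simpa using hcz
  have h0 : Memℓp (fun k => ‖A k x₀‖) p := hmem _ hx₀
  have h2 : Memℓp (fun k => ‖A k ((c : 𝕜) • z)‖) p := by
    refine aux_memℓp_mono (h1.add h0) (fun k => ?_)
    rw [abs_of_nonneg (norm_nonneg _)]
    calc ‖A k ((c : 𝕜) • z)‖ = ‖A k (x₀ + (c : 𝕜) • z) - A k x₀‖ := by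
          rw [← map_sub, add_sub_cancel_left]
      _ ≤ ‖A k (x₀ + (c : 𝕜) • z)‖ + ‖A k x₀‖ := norm_sub_le _ _
      _ = ((fun k => ‖A k (x₀ + (c : 𝕜) • z)‖) + fun k => ‖A k x₀‖) k := rfl
  refine aux_memℓp_mono (h2.const_smul (c⁻¹ : ℝ)) (fun k => ?_)
  have : ‖A k ((c : 𝕜) • z)‖ = c * ‖A k z‖ := by
    rw [map_smul, norm_smul, RCLike.norm_ofReal, abs_of_pos hc0]
  simp only [Pi.smul_apply, smul_eq_mul, this, abs_of_nonneg (norm_nonneg _)]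
  rw [← mul_assoc, inv_mul_cancel₀ hc0.ne', one_mul]


set_option maxHeartbeats 1000000 in
/-- Theorem 1: if `X*` has `M`-cotype `ρ`, `p ∈ [1, ρ/(ρ-1)]`,
`1/p - 1/r = 1 - 1/ρ`, and `(‖A₁‖, ‖A₂‖, …) ∉ ℓ_r`, then
`𝒟_p = {x : (‖A₁x‖, ‖A₂x‖, …) ∉ ℓ_p}` is dense in `X`. -/
theorem stmt_9 (𝕜 : Type*) [RCLike 𝕜] (X : Type*) [NormedAddCommGroup X]
    [NormedSpace 𝕜 X] [CompleteSpace X]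
    (Y : ℕ → Type*) [∀ k, NormedAddCommGroup (Y k)] [∀ k, NormedSpace 𝕜 (Y k)]
    (A : ∀ k, X →L[𝕜] Y k)
    (ρ : ℝ) (hρ : 1 ≤ ρ)
    (hcotype : ∃ C > (0 : ℝ), ∀ (m : ℕ) (v : Fin m → StrongDual 𝕜 X),
      ∃ ε : Fin m → 𝕜, (∀ j, ε j = 1 ∨ ε j = -1) ∧
        ‖∑ j, ε j • v j‖ ≥ C * (∑ j, ‖v j‖ ^ ρ) ^ (1 / ρ))
    (p r : ℝ≥0∞) (hp1 : 1 ≤ p)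
    (hp2 : p ≤ ENNReal.ofReal ρ / ENNReal.ofReal (ρ - 1))
    (hr : 1 / p = (1 - 1 / ENNReal.ofReal ρ) + 1 / r)
    (hA : ¬ Memℓp (fun k => ‖A k‖) r) :
    Dense {x : X | ¬ Memℓp (fun k => ‖A k x‖) p} := by
  by_contra hnd
  have hall : ∀ z : X, Memℓp (fun k => ‖A k z‖) p := aux_all A hnd
  obtain ⟨C, hC, hco⟩ := hcotype
  choose φ hφ1 hφ2 using fun k => aux_phi (A k)
  have hρ0 : (0:ℝ) < ρ := lt_of_lt_of_le one_pos hρ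
  have hiρ : 1/ρ ≤ 1 := by rw [div_le_one hρ0]; exact hρ
  have h1mρ : (0:ℝ) ≤ 1 - 1/ρ := by linarith
  have hp0 : p ≠ 0 := (zero_lt_one.trans_le hp1).ne'
  have hr0 : r ≠ 0 := by
    intro h0
    have htop : (1:ℝ≥0∞)/p = ⊤ := by rw [hr, h0]; simp
    rw [one_div, ENNReal.inv_eq_top] at htop
    exact hp0 htop
  by_cases hptop : p = ∞
  · -- p = ∞ : r = ∞, direct Banach–Steinhaus contradiction
    subst hptop
    have hrtop : (1:ℝ≥0∞)/r = 0 := by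
      have h0 : (0:ℝ≥0∞) = (1 - 1 / ENNReal.ofReal ρ) + 1/r := by
        rw [← hr]; simp
      exact (add_eq_zero.mp h0.symm).2
    rw [one_div, ENNReal.inv_eq_zero] at hrtop
    subst hrtop
    have hbs : ∀ x : X, ∃ Cx, ∀ k : ℕ, ‖φ k x‖ ≤ Cx := by
      intro x
      obtain ⟨M, hM⟩ := (hall x).bddAbove
      refine ⟨M, fun k => (hφ1 k x).trans ?_⟩
      have := hM ⟨k, rfl⟩
      simpa [norm_norm] using this
    obtain ⟨C', hC'⟩ := banach_steinhaus hbs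
    refine hA (memℓp_infty ⟨2 * C', ?_⟩)
    rintro y ⟨k, rfl⟩
    simp only [norm_norm]
    linarith [hφ2 k, hC' k]
  · -- p finite
    set pt := p.toReal with hpt
    have hpt1 : 1 ≤ pt := by
      rw [hpt, ← ENNReal.toReal_one]
      exact ENNReal.toReal_mono hptop hp1
    have hpt0 : (0:ℝ) < pt := lt_of_lt_of_le one_pos hpt1
    have hsummp : ∀ x : X, Summable (fun k => ‖A k x‖ ^ pt) := by
      intro x
      have := (hall x).summable (by rw [← hpt]; exact hpt0)
      simpa [norm_norm] using this
    set S : X → ℝ := fun x => ∑' k, ‖A k x‖ ^ pt with hS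
    have hSfin : ∀ (x : X) (F : Finset ℕ), ∑ k ∈ F, ‖A k x‖ ^ pt ≤ S x :=
      fun x F => Summable.sum_le_tsum F (fun k _ => by positivity) (hsummp x)
    have hSnn : ∀ x : X, 0 ≤ S x := fun x => tsum_nonneg (fun k => by positivity)
    have hSsingle : ∀ (x : X) (k : ℕ), ‖A k x‖ ≤ (S x) ^ (1/pt) := by
      intro x k
      have h1 : ‖A k x‖ ^ pt ≤ S x := Summable.le_tsum (hsummp x) k (fun j _ => by positivity)
      calc ‖A k x‖ = ((‖A k x‖ ^ pt) ^ (1/pt)) := by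
            rw [one_div, Real.rpow_rpow_inv (norm_nonneg _) hpt0.ne']
        _ ≤ (S x) ^ (1/pt) := Real.rpow_le_rpow (by positivity) h1 (by positivity)
    have h1p : 1/p = ENNReal.ofReal (1/pt) := by
      rw [one_div, one_div, ENNReal.ofReal_inv_of_pos hpt0, ENNReal.ofReal_toReal hptop]
    have hsub : (1:ℝ≥0∞) - 1/ENNReal.ofReal ρ = ENNReal.ofReal (1 - 1/ρ) := by
      rw [ENNReal.ofReal_sub 1 (by positivity : (0:ℝ) ≤ 1/ρ), ENNReal.ofReal_one,
        one_div, one_div, ENNReal.ofReal_inv_of_pos hρ0]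
    by_cases hrtop : r = ∞
    · -- r = ∞ : uniform boundedness suffices
      have hbs : ∀ x : X, ∃ Cx, ∀ k : ℕ, ‖φ k x‖ ≤ Cx :=
        fun x => ⟨(S x) ^ (1/pt), fun k => (hφ1 k x).trans (hSsingle x k)⟩
      obtain ⟨C', hC'⟩ := banach_steinhaus hbs
      subst hrtop
      refine hA (memℓp_infty ⟨2 * C', ?_⟩)
      rintro y ⟨k, rfl⟩
      simp only [norm_norm]
      linarith [hφ2 k, hC' k]
    · -- r finite : the main case
      set rt := r.toReal with hrt
      have hrt0 : (0:ℝ) < rt := ENNReal.toReal_pos hr0 hrtop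
      have hirr : 1/r = ENNReal.ofReal (1/rt) := by
        rw [one_div, one_div, ENNReal.ofReal_inv_of_pos hrt0, ENNReal.ofReal_toReal hrtop]
      have hkey : 1/pt = (1 - 1/ρ) + 1/rt := by
        have h2 : ENNReal.ofReal (1/pt) = ENNReal.ofReal ((1 - 1/ρ) + 1/rt) := by
          rw [ENNReal.ofReal_add h1mρ (by positivity), ← h1p, ← hsub, ← hirr]
          exact hr
        exact (ENNReal.ofReal_eq_ofReal_iff (by positivity) (by positivity)).mp h2
      rcases eq_or_lt_of_le hpt1 with hpt_eq | hpt_gt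
      · -- pt = 1 ; rt = ρ
        have hrtρ : rt = ρ := by
          have h3 : rt⁻¹ = ρ⁻¹ := by
            rw [← hpt_eq] at hkey
            rw [one_div, one_div, one_div] at hkey
            norm_num at hkey
            linarith
          exact inv_injective h3
        have hbs : ∀ x : X, ∃ Cx,
            ∀ i : {c : Finset ℕ × (ℕ → 𝕜) // ∀ k, ‖c.2 k‖ ≤ 1},
              ‖(∑ k ∈ i.1.1, i.1.2 k • φ k) x‖ ≤ Cx := by
          intro x
          refine ⟨S x, ?_⟩
          rintro ⟨⟨F, c⟩, hc⟩
          calc ‖(∑ k ∈ F, c k • φ k) x‖ ≤ ∑ k ∈ F, ‖c k‖ * ‖φ k x‖ := by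
                rw [ContinuousLinearMap.sum_apply]
                refine (norm_sum_le _ _).trans (Finset.sum_le_sum fun k _ => ?_)
                rw [ContinuousLinearMap.smul_apply, norm_smul]
            _ ≤ ∑ k ∈ F, ‖A k x‖ := by
                refine Finset.sum_le_sum fun k _ => ?_
                calc ‖c k‖ * ‖φ k x‖ ≤ 1 * ‖φ k x‖ :=
                      mul_le_mul_of_nonneg_right (hc k) (norm_nonneg _)
                  _ = ‖φ k x‖ := one_mul _
                  _ ≤ ‖A k x‖ := hφ1 k x
            _ = ∑ k ∈ F, ‖A k x‖ ^ pt := by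
                refine Finset.sum_congr rfl fun k _ => ?_
                rw [← hpt_eq, Real.rpow_one]
            _ ≤ S x := hSfin x F
        obtain ⟨C', hC'⟩ := banach_steinhaus hbs
        have hbound : ∀ F : Finset ℕ, ∑ k ∈ F, ‖A k‖ ^ rt ≤ 2^ρ * (C'/C)^ρ := by
          intro F
          obtain ⟨ε, hε1, hεle⟩ := aux_cotype hco F φ
          have h5 : C * (∑ k ∈ F, ‖φ k‖^ρ)^(1/ρ) ≤ C' :=
            le_trans hεle (hC' ⟨(F, ε), fun k => le_of_eq (hε1 k)⟩)
          have h6 : (∑ k ∈ F, ‖φ k‖^ρ)^(1/ρ) ≤ C'/C :=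
            (le_div_iff₀ hC).mpr (by linarith [mul_comm C ((∑ k ∈ F, ‖φ k‖^ρ)^(1/ρ))])
          have h7 : ∑ k ∈ F, ‖φ k‖^ρ ≤ (C'/C)^ρ := by
            have h8 := Real.rpow_le_rpow (by positivity) h6 hρ0.le
            rwa [one_div, Real.rpow_inv_rpow (Finset.sum_nonneg fun k _ => by positivity)
              hρ0.ne'] at h8
          have h9 : ∑ k ∈ F, (‖A k‖/2)^ρ ≤ (C'/C)^ρ :=
            le_trans (Finset.sum_le_sum fun k _ =>
              Real.rpow_le_rpow (by positivity) (hφ2 k) hρ0.le) h7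
          have h10 : ∀ k, (‖A k‖/2)^ρ = ‖A k‖^ρ / 2^ρ :=
            fun k => Real.div_rpow (norm_nonneg _) (by norm_num) ρ
          rw [hrtρ]
          have h11 : (∑ k ∈ F, ‖A k‖^ρ) / 2^ρ ≤ (C'/C)^ρ := by
            rw [Finset.sum_div]
            refine le_trans (le_of_eq ?_) h9
            exact (Finset.sum_congr rfl fun k _ => (h10 k).symm)
          have h2ρ : (0:ℝ) < 2^ρ := Real.rpow_pos_of_pos (by norm_num) ρ
          calc ∑ k ∈ F, ‖A k‖^ρ = ((∑ k ∈ F, ‖A k‖^ρ)/2^ρ) * 2^ρ := by field_simp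
            _ ≤ (C'/C)^ρ * 2^ρ := mul_le_mul_of_nonneg_right h11 h2ρ.le
            _ = 2^ρ * (C'/C)^ρ := by ring
        refine hA (memℓp_gen' (C := 2^ρ * (C'/C)^ρ) fun F => ?_)
        simp only [norm_norm]
        rw [← hrt]
        exact hbound F
      · -- pt > 1
        set q := Real.conjExponent pt with hqdef
        have hq : pt.HolderConjugate q := Real.HolderConjugate.conjExponent hpt_gt
        have hq0 : (0:ℝ) < q := hq.symm.pos
        have hqinv : 1/pt + 1/q = 1 := by
          rw [one_div, one_div]; exact hq.inv_add_inv_eq_one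
        have hρrt : 1/ρ = 1/rt + 1/q := by linarith
        have hρrt_lt : ρ < rt := by
          have h12 : 1/rt < 1/ρ := by
            have : (0:ℝ) < 1/q := by positivity
            linarith
          have e1 : rt * (1/rt) = 1 := by field_simp
          have e2 : ρ * (1/ρ) = 1 := by field_simp
          nlinarith [mul_pos hρ0 hrt0, h12, e1, e2]
        set α := rt/ρ - 1 with hα
        have hα0 : (0:ℝ) < α := by
          rw [hα, sub_pos, lt_div_iff₀ hρ0, one_mul]
          exact hρrt_lt
        have hαq : α * q = rt := by
          have e1 : rt*q*(1/rt) = q := by field_simp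
          have e2 : rt*q*(1/q) = rt := by field_simp
          have e3 : rt*q*(1/ρ) = q + rt := by
            rw [hρrt, mul_add, e1, e2]
          have e4 : α * q = rt*q*(1/ρ) - q := by rw [hα]; ring
          linear_combination e4 + e3
        have hα1ρ : (α + 1) * ρ = rt := by
          rw [hα]
          field_simp
          ring
        have hbs : ∀ x : X, ∃ Cx,
            ∀ i : {c : Finset ℕ × (ℕ → 𝕜) // ∑ k ∈ c.1, ‖c.2 k‖ ^ q ≤ 1},
              ‖(∑ k ∈ i.1.1, i.1.2 k • φ k) x‖ ≤ Cx := by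
          intro x
          refine ⟨(S x)^(1/pt), ?_⟩
          rintro ⟨⟨F, c⟩, hc⟩
          calc ‖(∑ k ∈ F, c k • φ k) x‖ ≤ ∑ k ∈ F, ‖c k‖ * ‖φ k x‖ := by
                rw [ContinuousLinearMap.sum_apply]
                refine (norm_sum_le _ _).trans (Finset.sum_le_sum fun k _ => ?_)
                rw [ContinuousLinearMap.smul_apply, norm_smul]
            _ ≤ ∑ k ∈ F, ‖c k‖ * ‖A k x‖ := Finset.sum_le_sum fun k _ =>
                mul_le_mul_of_nonneg_left (hφ1 k x) (norm_nonneg _)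
            _ ≤ (∑ k ∈ F, ‖c k‖^q)^(1/q) * (∑ k ∈ F, ‖A k x‖^pt)^(1/pt) := by
                have h13 := Real.inner_le_Lp_mul_Lq F (fun k => ‖c k‖)
                  (fun k => ‖A k x‖) hq.symm
                simpa [abs_norm] using h13
            _ ≤ 1 * (S x)^(1/pt) := by
                refine mul_le_mul ?_ ?_ (by positivity) zero_le_one
                · exact Real.rpow_le_one (Finset.sum_nonneg fun k _ => by positivity) hc
                    (by positivity)
                · exact Real.rpow_le_rpow (Finset.sum_nonneg fun k _ => by positivity)
                    (hSfin x F) (by positivity)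
            _ = (S x)^(1/pt) := one_mul _
        obtain ⟨C', hC'⟩ := banach_steinhaus hbs
        have hC'0 : 0 ≤ C' :=
          le_trans (norm_nonneg _) (hC' ⟨(∅, fun _ => 0), by simp⟩)
        have hbound : ∀ F : Finset ℕ, ∑ k ∈ F, ‖A k‖ ^ rt ≤ (2*(C'/C))^rt := by
          intro F
          set Sf := ∑ k ∈ F, ‖A k‖ ^ rt with hSfdef
          have hSfnn : 0 ≤ Sf := Finset.sum_nonneg fun k _ => by positivity
          rcases eq_or_lt_of_le hSfnn with h0 | hpos
          · rw [← h0]; positivity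
          · set N := Sf ^ (1/q) with hN
            have hN0 : 0 < N := Real.rpow_pos_of_pos hpos _
            set lam : ℕ → ℝ := fun k => ‖A k‖ ^ α / N with hlam
            have h2N : (0:ℝ) < 2*N := by linarith
            have h2Nρ : (0:ℝ) < (2*N)^ρ := Real.rpow_pos_of_pos h2N ρ
            have hlam_nn : ∀ k, 0 ≤ lam k := fun k => by
              simp only [hlam]
              exact div_nonneg (Real.rpow_nonneg (norm_nonneg _) _) hN0.le
            obtain ⟨ε, hε1, hεle⟩ := aux_cotype hco F (fun k => ((lam k : ℝ) : 𝕜) • φ k)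
            have hcnorm : ∀ k, ‖ε k * ((lam k : ℝ) : 𝕜)‖ = lam k := fun k => by
              rw [norm_mul, hε1, one_mul, RCLike.norm_ofReal, abs_of_nonneg (hlam_nn k)]
            have hNq : N ^ q = Sf := by
              rw [hN, one_div, Real.rpow_inv_rpow hSfnn hq0.ne']
            have hlam_q : ∀ k ∈ F, lam k ^ q = ‖A k‖ ^ rt / Sf := by
              intro k _
              rw [hlam]
              beta_reduce
              rw [Real.div_rpow (by positivity) hN0.le, hNq,
                ← Real.rpow_mul (norm_nonneg _), hαq]
            have hconstraint : ∑ k ∈ F, ‖ε k * ((lam k : ℝ) : 𝕜)‖ ^ q ≤ 1 := by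
              refine le_of_eq ?_
              calc ∑ k ∈ F, ‖ε k * ((lam k : ℝ) : 𝕜)‖ ^ q
                  = ∑ k ∈ F, ‖A k‖ ^ rt / Sf := Finset.sum_congr rfl fun k hk => by
                    rw [hcnorm k, hlam_q k hk]
                _ = Sf / Sf := by rw [← Finset.sum_div]
                _ = 1 := div_self hpos.ne'
            have hup : ‖∑ k ∈ F, ε k • (((lam k : ℝ) : 𝕜) • φ k)‖ ≤ C' := by
              have he : ∑ k ∈ F, ε k • (((lam k : ℝ) : 𝕜) • φ k)
                  = ∑ k ∈ F, (ε k * ((lam k : ℝ) : 𝕜)) • φ k :=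
                Finset.sum_congr rfl fun k _ => (smul_smul _ _ _)
              rw [he]
              exact hC' ⟨(F, fun k => ε k * ((lam k : ℝ) : 𝕜)), hconstraint⟩
            have hα1 : α + 1 ≠ 0 := by positivity
            have hlow : ∀ k ∈ F, ‖A k‖ ^ rt / (2*N)^ρ ≤ ‖((lam k : ℝ) : 𝕜) • φ k‖ ^ ρ := by
              intro k _
              have e1 : ‖((lam k : ℝ) : 𝕜) • φ k‖ = lam k * ‖φ k‖ := by
                rw [norm_smul, RCLike.norm_ofReal, abs_of_nonneg (hlam_nn k)]
              have e2 : lam k * (‖A k‖ / 2) ≤ lam k * ‖φ k‖ :=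
                mul_le_mul_of_nonneg_left (hφ2 k) (hlam_nn k)
              have e3 : lam k * (‖A k‖ / 2) = ‖A k‖ ^ (α+1) / (2*N) := by
                simp only [hlam]
                rw [Real.rpow_add' (norm_nonneg _) hα1, Real.rpow_one]
                ring
              calc ‖A k‖ ^ rt / (2*N)^ρ = (‖A k‖ ^ (α+1) / (2*N)) ^ ρ := by
                    rw [Real.div_rpow (Real.rpow_nonneg (norm_nonneg _) _) h2N.le,
                      ← Real.rpow_mul (norm_nonneg _), hα1ρ]
                _ ≤ (lam k * ‖φ k‖)^ρ :=
                    Real.rpow_le_rpow (div_nonneg (Real.rpow_nonneg (norm_nonneg _) _) h2N.le)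
                      (e3 ▸ e2) hρ0.le
                _ = ‖((lam k : ℝ) : 𝕜) • φ k‖ ^ ρ := by rw [e1]
            have hsum_low : Sf / (2*N)^ρ ≤ ∑ k ∈ F, ‖((lam k : ℝ) : 𝕜) • φ k‖^ρ := by
              rw [hSfdef, Finset.sum_div]
              exact Finset.sum_le_sum hlow
            have hfinal1 : C * (Sf/(2*N)^ρ)^(1/ρ) ≤ C' := by
              refine le_trans ?_ (le_trans hεle hup)
              exact mul_le_mul_of_nonneg_left
                (Real.rpow_le_rpow (div_nonneg hSfnn h2Nρ.le) hsum_low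
                  (le_of_lt (by positivity))) hC.le
            have e4 : (Sf/(2*N)^ρ)^(1/ρ) = Sf^(1/ρ)/(2*N) := by
              rw [Real.div_rpow hSfnn h2Nρ.le, one_div,
                Real.rpow_rpow_inv h2N.le hρ0.ne']
            rw [e4] at hfinal1
            have hfinal2 : Sf^(1/ρ) ≤ 2*N*(C'/C) := by
              have h14 : Sf^(1/ρ)/(2*N) ≤ C'/C :=
                (le_div_iff₀ hC).mpr (by linarith [mul_comm C (Sf^(1/ρ)/(2*N))])
              calc Sf^(1/ρ) = (Sf^(1/ρ)/(2*N)) * (2*N) := by field_simp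
                _ ≤ (C'/C) * (2*N) := mul_le_mul_of_nonneg_right h14 h2N.le
                _ = 2*N*(C'/C) := by ring
            have hdecomp : Sf^(1/ρ) = Sf^(1/rt) * N := by
              rw [hN, ← Real.rpow_add hpos, ← hρrt]
            rw [hdecomp] at hfinal2
            have hfinal3 : Sf^(1/rt) ≤ 2*(C'/C) := by
              have h15 : Sf^(1/rt) * N ≤ (2*(C'/C)) * N := by linarith
              exact (mul_le_mul_iff_left₀ hN0).mp h15
            calc Sf = (Sf^(1/rt))^rt := by
                  rw [one_div, Real.rpow_inv_rpow hSfnn hrt0.ne']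
              _ ≤ (2*(C'/C))^rt := Real.rpow_le_rpow (by positivity) hfinal3 hrt0.le
        refine hA (memℓp_gen' (C := (2*(C'/C))^rt) fun F => ?_)
        simp only [norm_norm]
        rw [← hrt]
        exact hbound F
end

section
/- Let $X$ be a Banach space whose dual $X^*$ has $M$-cotype $\rho \in [1,\infty)$, let $Y_k$ be normed spaces and $A_k \in \mathcal{B}(X, Y_k)$ for $k \geq 1$. Let $p_0 \in (1, \rho/(\rho-1)]$ and define $r_0 \in (\rho, \infty]$ by $1/p_0 - 1/r_0 = 1 - 1/\rho$. If $(\|A_1\|, \|A_2\|, \ldots) \notin \ell_r$ for every $r \in [\rho, r_0)$, then $\bigcap_{p \in [1, p_0)} \mathcal{D}_p$ is dense in $X$, where $\mathcal{D}_p = \{x \in X : (\|A_1 x\|, \|A_2 x\|, \ldots) \notin \ell_p\}$. -/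
open scoped ENNReal
open Finset

private lemma aux_add_rpow_le {t a b : ℝ} (ht : 0 ≤ t) (ha : 0 ≤ a) (hb : 0 ≤ b) :
    (a + b) ^ t ≤ 2 ^ t * (a ^ t + b ^ t) := by
  have h1 : a + b ≤ 2 * max a b := by
    rcases le_total a b with h | h
    · rw [max_eq_right h]; linarith
    · rw [max_eq_left h]; linarith
  have h2 : (a + b) ^ t ≤ (2 * max a b) ^ t :=
    Real.rpow_le_rpow (by linarith) h1 ht
  have h3 : (2 * max a b : ℝ) ^ t = 2 ^ t * (max a b) ^ t :=
    Real.mul_rpow (by norm_num) (le_max_of_le_left ha)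
  have h4 : (max a b) ^ t ≤ a ^ t + b ^ t := by
    rcases max_cases a b with ⟨h, _⟩ | ⟨h, _⟩ <;> rw [h]
    · exact le_add_of_nonneg_right (Real.rpow_nonneg hb t)
    · exact le_add_of_nonneg_left (Real.rpow_nonneg ha t)
  calc (a + b) ^ t ≤ 2 ^ t * (max a b) ^ t := by rw [← h3]; exact h2
    _ ≤ 2 ^ t * (a ^ t + b ^ t) := by
        have : (0:ℝ) ≤ 2 ^ t := Real.rpow_nonneg (by norm_num) t
        nlinarith

private lemma aux_exists_norming {𝕜 : Type*} [RCLike 𝕜] {X Y : Type*}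
    [NormedAddCommGroup X] [NormedSpace 𝕜 X] [NormedAddCommGroup Y] [NormedSpace 𝕜 Y]
    (A : X →L[𝕜] Y) :
    ∃ v : X →L[𝕜] 𝕜, (∀ x, ‖v x‖ ≤ ‖A x‖) ∧ ‖A‖ ≤ 2 * ‖v‖ := by
  rcases eq_or_lt_of_le (norm_nonneg A) with hA | hA
  · refine ⟨0, fun x => by simp, by rw [← hA]; positivity⟩
  · have hne : ¬ ∀ x, ‖A x‖ ≤ (‖A‖ / 2) * ‖x‖ := by
      intro h
      have := A.opNorm_le_bound (by positivity) h
      linarith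
    push_neg at hne
    obtain ⟨x, hx⟩ := hne
    have hx0 : x ≠ 0 := by
      intro h; rw [h] at hx; simp at hx
    have hAx : A x ≠ 0 := by
      intro h
      rw [h, norm_zero] at hx
      have : 0 < ‖x‖ := norm_pos_iff.2 hx0
      nlinarith
    obtain ⟨g, hg1, hg2⟩ := exists_dual_vector 𝕜 (A x) (norm_ne_zero_iff.2 hAx)
    refine ⟨g.comp A, fun y => ?_, ?_⟩
    · calc ‖g (A y)‖ ≤ ‖g‖ * ‖A y‖ := g.le_opNorm _
        _ = ‖A y‖ := by rw [hg1, one_mul]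
    · have h1 : ‖(g.comp A) x‖ = ‖A x‖ := by
        simp only [ContinuousLinearMap.comp_apply, hg2]
        rw [RCLike.norm_ofReal, abs_of_nonneg (norm_nonneg _)]
      have h2 : ‖A x‖ ≤ ‖g.comp A‖ * ‖x‖ := h1 ▸ (g.comp A).le_opNorm x
      have hxpos : 0 < ‖x‖ := norm_pos_iff.2 hx0
      nlinarith

private lemma aux_core {𝕜 : Type*} [RCLike 𝕜] {X : Type*} [NormedAddCommGroup X]
    [NormedSpace 𝕜 X]
    {Y : ℕ → Type*} [∀ k, NormedAddCommGroup (Y k)] [∀ k, NormedSpace 𝕜 (Y k)]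
    (A : ∀ k, X →L[𝕜] Y k)
    {ρ C : ℝ} (hρ : 1 ≤ ρ) (hC : 0 < C)
    (hcot : ∀ (m : ℕ) (v : Fin m → StrongDual 𝕜 X),
      ∃ ε : Fin m → 𝕜, (∀ j, ε j = 1 ∨ ε j = -1) ∧
        ‖∑ j, ε j • v j‖ ≥ C * (∑ j, ‖v j‖ ^ ρ) ^ (1 / ρ))
    (hnorming : ∀ k, ∃ v : X →L[𝕜] 𝕜, (∀ x, ‖v x‖ ≤ ‖(A k) x‖) ∧ ‖A k‖ ≤ 2 * ‖v‖)
    {t B r : ℝ} (ht : 1 < t) (hB : 0 ≤ B)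
    (hbound : ∀ x : X, ∀ N : ℕ, ∑ k ∈ range N, ‖(A k) x‖ ^ t ≤ B * ‖x‖ ^ t)
    (hrpos : 0 < r) (hr : 1 / r = 1 / ρ + 1 / t - 1) :
    ∀ N : ℕ, ∑ k ∈ range N, ‖A k‖ ^ r ≤ 2 ^ r * (B ^ (1/t) / C) ^ r := by
  have hρ0 : 0 < ρ := lt_of_lt_of_le one_pos hρ
  have ht0 : 0 < t := lt_trans one_pos ht
  have ht1 : 0 < t - 1 := by linarith
  set t' : ℝ := t / (t - 1) with ht'def
  have ht'0 : 0 < t' := div_pos ht0 ht1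
  have hconj : t'.HolderConjugate t :=
    ((Real.holderConjugate_iff_eq_conjExponent ht).2 rfl).symm
  have h1t' : 1 / t' = 1 - 1 / t := by rw [ht'def]; field_simp
  set θ : ℝ := r / t' with hθdef
  have hθ : 0 < θ := div_pos hrpos ht'0
  have hθt' : θ * t' = r := div_mul_cancel₀ r (ne_of_gt ht'0)
  have hkey : (θ + 1) * ρ = r := by
    have h2 : 1 / r = 1 / ρ - 1 / t' := by rw [h1t']; linarith
    have hρne : ρ ≠ 0 := ne_of_gt hρ0
    have hrne : r ≠ 0 := ne_of_gt hrpos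
    have ht'ne : t' ≠ 0 := ne_of_gt ht'0
    rw [hθdef]
    field_simp at h2 ⊢
    nlinarith [h2]
  choose v hv1 hv2 using hnorming
  set b : ℕ → ℝ := fun k => ‖v k‖ with hbdef
  have hb0 : ∀ k, 0 ≤ b k := fun k => norm_nonneg _
  set a : ℕ → ℝ := fun k => b k ^ θ with hadef
  have ha0 : ∀ k, 0 ≤ a k := fun k => Real.rpow_nonneg (hb0 k) θ
  -- termwise identities
  have hterm1 : ∀ k, (a k * b k) ^ ρ = b k ^ r := by
    intro k
    rcases eq_or_lt_of_le (hb0 k) with h | h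
    · rw [hadef]
      simp only [← h]
      rw [Real.zero_rpow (ne_of_gt hθ), zero_mul,
        Real.zero_rpow (ne_of_gt hρ0), Real.zero_rpow (ne_of_gt hrpos)]
    · have e1 : a k * b k = b k ^ (θ + 1) := by
        rw [hadef]; dsimp only
        rw [Real.rpow_add h, Real.rpow_one]
      rw [e1, ← Real.rpow_mul h.le, hkey]
  have hterm2 : ∀ k, a k ^ t' = b k ^ r := by
    intro k
    rw [hadef]; dsimp only
    rw [← Real.rpow_mul (hb0 k), hθt']
  -- main estimate for fixed N
  intro N
  obtain ⟨ε, hε, hineq⟩ := hcot N (fun j => ((a j.1 : ℝ) : 𝕜) • v j.1)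
  set S : ℝ := ∑ j : Fin N, b j.1 ^ r with hSdef
  have hS0 : 0 ≤ S := Finset.sum_nonneg fun j _ => Real.rpow_nonneg (hb0 _) r
  have hεnorm : ∀ j, ‖ε j‖ = 1 := by
    intro j; rcases hε j with h | h <;> rw [h] <;> simp
  have hwnorm : ∀ j : Fin N, ‖((a j.1 : ℝ) : 𝕜) • v j.1‖ = a j.1 * b j.1 := by
    intro j
    rw [norm_smul ((a j.1 : ℝ) : 𝕜) (v j.1), RCLike.norm_ofReal, abs_of_nonneg (ha0 _)]
  have hlow : C * S ^ (1/ρ) ≤ ‖∑ j : Fin N, ε j • (((a j.1 : ℝ) : 𝕜) • v j.1)‖ := by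
    refine le_trans (le_of_eq ?_) hineq
    congr 2
    refine Finset.sum_congr rfl fun j _ => ?_
    rw [hwnorm j, hterm1]
  have hup : ‖∑ j : Fin N, ε j • (((a j.1 : ℝ) : 𝕜) • v j.1)‖ ≤ S ^ (1/t') * B ^ (1/t) := by
    refine ContinuousLinearMap.opNorm_le_bound _
      (mul_nonneg (Real.rpow_nonneg hS0 _) (Real.rpow_nonneg hB _)) fun x => ?_
    have e2 : (∑ j : Fin N, ε j • (((a j.1 : ℝ) : 𝕜) • v j.1)) x
        = ∑ j : Fin N, ε j • (((a j.1 : ℝ) : 𝕜) • (v j.1 x)) := by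
      simp only [ContinuousLinearMap.sum_apply, ContinuousLinearMap.smul_apply]
    rw [e2]
    calc ‖∑ j : Fin N, ε j • (((a j.1 : ℝ) : 𝕜) • (v j.1 x))‖
        ≤ ∑ j : Fin N, ‖ε j • (((a j.1 : ℝ) : 𝕜) • (v j.1 x))‖ := norm_sum_le _ _
      _ ≤ ∑ j : Fin N, a j.1 * ‖(A j.1) x‖ := by
          refine Finset.sum_le_sum fun j _ => ?_
          rw [norm_smul, hεnorm j, one_mul, norm_smul, RCLike.norm_ofReal,
            abs_of_nonneg (ha0 _)]
          exact mul_le_mul_of_nonneg_left (hv1 _ _) (ha0 _)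
      _ ≤ (∑ j : Fin N, a j.1 ^ t') ^ (1/t') * (∑ j : Fin N, ‖(A j.1) x‖ ^ t) ^ (1/t) :=
          Real.inner_le_Lp_mul_Lq_of_nonneg univ hconj (fun j _ => ha0 _)
            (fun j _ => norm_nonneg _)
      _ ≤ S ^ (1/t') * (B ^ (1/t) * ‖x‖) := by
          have e3 : (∑ j : Fin N, a j.1 ^ t') = S := by
            rw [hSdef]; exact Finset.sum_congr rfl fun j _ => hterm2 _
          rw [e3]
          refine mul_le_mul_of_nonneg_left ?_ (Real.rpow_nonneg hS0 _)
          have e4 : (∑ j : Fin N, ‖(A j.1) x‖ ^ t) = ∑ k ∈ range N, ‖(A k) x‖ ^ t :=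
            Fin.sum_univ_eq_sum_range (fun k => ‖(A k) x‖ ^ t) N
          calc (∑ j : Fin N, ‖(A j.1) x‖ ^ t) ^ (1/t)
              ≤ (B * ‖x‖ ^ t) ^ (1/t) := by
                refine Real.rpow_le_rpow ?_ (e4 ▸ hbound x N) (by positivity)
                exact Finset.sum_nonneg fun j _ => Real.rpow_nonneg (norm_nonneg _) t
            _ = B ^ (1/t) * ‖x‖ := by
                rw [Real.mul_rpow hB (Real.rpow_nonneg (norm_nonneg _) t),
                  ← Real.rpow_mul (norm_nonneg x), mul_one_div_cancel (ne_of_gt ht0),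
                  Real.rpow_one]
      _ = S ^ (1/t') * B ^ (1/t) * ‖x‖ := by ring
  have hcomb : C * S ^ (1/ρ) ≤ S ^ (1/t') * B ^ (1/t) := le_trans hlow hup
  -- conclude S ≤ (B^(1/t)/C)^r
  have hSle : S ≤ (B ^ (1/t) / C) ^ r := by
    rcases eq_or_lt_of_le hS0 with h | hSpos
    · rw [← h]; positivity
    · have h1ρ : 1/ρ = 1/t' + 1/r := by rw [h1t']; linarith
      rw [h1ρ, Real.rpow_add hSpos] at hcomb
      have hp1 : 0 < S ^ (1/t') := Real.rpow_pos_of_pos hSpos _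
      have h5 : C * S ^ (1/r) ≤ B ^ (1/t) := by nlinarith [hcomb]
      have h6 : S ^ (1/r) ≤ B ^ (1/t) / C := (le_div_iff₀ hC).2 (by linarith)
      calc S = (S ^ (1/r)) ^ r := by
            rw [← Real.rpow_mul hS0, one_div_mul_cancel (ne_of_gt hrpos), Real.rpow_one]
        _ ≤ (B ^ (1/t) / C) ^ r :=
            Real.rpow_le_rpow (Real.rpow_nonneg hS0 _) h6 hrpos.le
  calc ∑ k ∈ range N, ‖A k‖ ^ r ≤ ∑ k ∈ range N, (2 * b k) ^ r := by
        refine Finset.sum_le_sum fun k _ => Real.rpow_le_rpow (norm_nonneg _) (hv2 k) hrpos.le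
    _ = ∑ k ∈ range N, 2 ^ r * b k ^ r := by
        refine Finset.sum_congr rfl fun k _ => Real.mul_rpow (by norm_num) (hb0 k)
    _ = 2 ^ r * S := by
        rw [← Finset.mul_sum, hSdef, Fin.sum_univ_eq_sum_range (fun k => b k ^ r) N]
    _ ≤ 2 ^ r * (B ^ (1/t) / C) ^ r := by
        refine mul_le_mul_of_nonneg_left hSle (Real.rpow_nonneg (by norm_num) r)

/-- Theorem 2: if `X*` has `M`-cotype `ρ`, `p₀ ∈ (1, ρ/(ρ-1)]`,
`1/p₀ - 1/r₀ = 1 - 1/ρ`, and `(‖A₁‖, ‖A₂‖, …) ∉ ℓ_r` for every `r ∈ [ρ, r₀)`,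
then `⋂_{p ∈ [1, p₀)} 𝒟_p` is dense in `X`. -/
theorem stmt_10 (𝕜 : Type*) [RCLike 𝕜] (X : Type*) [NormedAddCommGroup X]
    [NormedSpace 𝕜 X] [CompleteSpace X]
    (Y : ℕ → Type*) [∀ k, NormedAddCommGroup (Y k)] [∀ k, NormedSpace 𝕜 (Y k)]
    (A : ∀ k, X →L[𝕜] Y k)
    (ρ : ℝ) (hρ : 1 ≤ ρ)
    (hcotype : ∃ C > (0 : ℝ), ∀ (m : ℕ) (v : Fin m → StrongDual 𝕜 X),
      ∃ ε : Fin m → 𝕜, (∀ j, ε j = 1 ∨ ε j = -1) ∧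
        ‖∑ j, ε j • v j‖ ≥ C * (∑ j, ‖v j‖ ^ ρ) ^ (1 / ρ))
    (p₀ r₀ : ℝ≥0∞) (hp₀1 : 1 < p₀)
    (hp₀2 : p₀ ≤ ENNReal.ofReal ρ / ENNReal.ofReal (ρ - 1))
    (hr₀ : 1 / p₀ = (1 - 1 / ENNReal.ofReal ρ) + 1 / r₀)
    (hA : ∀ r : ℝ≥0∞, ENNReal.ofReal ρ ≤ r → r < r₀ →
      ¬ Memℓp (fun k => ‖A k‖) r) :
    Dense {x : X | ∀ p : ℝ≥0∞, 1 ≤ p → p < p₀ →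
      ¬ Memℓp (fun k => ‖A k x‖) p} := by
  classical
  obtain ⟨C, hC, hcot⟩ := hcotype
  have hρ0 : 0 < ρ := lt_of_lt_of_le one_pos hρ
  have key : ∀ q : ℝ≥0∞, 1 < q → q < p₀ → q ≠ ⊤ →
      {x : X | ¬ Memℓp (fun k => ‖(A k) x‖) q} ∈ residual X := by
    intro q hq1 hq2 hqt
    set t : ℝ := q.toReal with htdef
    have ht : 1 < t := by
      rw [htdef, ← ENNReal.toReal_one]
      exact (ENNReal.toReal_lt_toReal (by simp) hqt).2 hq1
    have ht0 : 0 < t := lt_trans one_pos ht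
    set E : ℕ → Set X := fun n =>
      {x | ∀ N : ℕ, ∑ k ∈ Finset.range N, ‖(A k) x‖ ^ t ≤ n} with hEdef
    have hEclosed : ∀ n, IsClosed (E n) := by
      intro n
      have hEeq : E n = ⋂ N : ℕ, {x | ∑ k ∈ Finset.range N, ‖(A k) x‖ ^ t ≤ n} := by
        ext x; simp [hEdef, Set.mem_iInter]
      rw [hEeq]
      refine isClosed_iInter fun N => ?_
      have hcont : Continuous fun x : X => ∑ k ∈ Finset.range N, ‖(A k) x‖ ^ t := by
        refine continuous_finset_sum _ fun k _ => ?_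
        exact ((A k).continuous.norm).rpow_const fun x => Or.inr ht0.le
      exact isClosed_le hcont continuous_const
    by_cases hint : ∃ n, (interior (E n)).Nonempty
    · exfalso
      obtain ⟨n, x₀, hx₀⟩ := hint
      rw [mem_interior_iff_mem_nhds, Metric.mem_nhds_iff] at hx₀
      obtain ⟨δ, hδ, hball⟩ := hx₀
      have hx₀E : x₀ ∈ E n := hball (Metric.mem_ball_self hδ)
      set B : ℝ := (2/δ) ^ t * (2 ^ t * (2 * n)) with hBdef
      have hB : 0 ≤ B := by positivity
      have hbound : ∀ x : X, ∀ N : ℕ,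
          ∑ k ∈ Finset.range N, ‖(A k) x‖ ^ t ≤ B * ‖x‖ ^ t := by
        intro x N
        rcases eq_or_ne x 0 with rfl | hx
        · have : ∀ k, ‖(A k) (0:X)‖ ^ t = 0 := by
            intro k; rw [map_zero, norm_zero, Real.zero_rpow (ne_of_gt ht0)]
          simp only [this, Finset.sum_const, smul_zero, norm_zero,
            Real.zero_rpow (ne_of_gt ht0), mul_zero, le_refl]
        · have hxn : 0 < ‖x‖ := norm_pos_iff.2 hx
          set c : ℝ := δ / (2 * ‖x‖) with hcdef
          have hc : 0 < c := div_pos hδ (by linarith)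
          set y : X := ((c : ℝ) : 𝕜) • x with hydef
          have hyn : ‖y‖ = δ / 2 := by
            rw [hydef, norm_smul ((c:ℝ):𝕜) x, RCLike.norm_ofReal, abs_of_pos hc, hcdef]
            rw [div_mul_eq_mul_div, mul_comm (2:ℝ) ‖x‖, ← div_div, mul_div_assoc,
              div_self hxn.ne', mul_one]
          have hzball : x₀ + y ∈ Metric.ball x₀ δ := by
            rw [Metric.mem_ball, dist_eq_norm, add_sub_cancel_left, hyn]
            linarith
          have hzE : x₀ + y ∈ E n := hball hzball
          have hpt : ∀ k, ‖(A k) x‖ ^ t ≤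
              (2/δ)^t * ‖x‖^t * (2^t * (‖(A k) (x₀+y)‖^t + ‖(A k) x₀‖^t)) := by
            intro k
            have h1 : (A k) y = (A k) (x₀ + y) - (A k) x₀ := by rw [map_add]; abel
            have h2 : ‖(A k) y‖ ≤ ‖(A k) (x₀+y)‖ + ‖(A k) x₀‖ := by
              rw [h1]; exact norm_sub_le _ _
            have h3 : ‖(A k) x‖ = c⁻¹ * ‖(A k) y‖ := by
              rw [hydef, map_smul, norm_smul ((c:ℝ):𝕜) ((A k) x), RCLike.norm_ofReal,
                abs_of_pos hc, inv_mul_cancel_left₀ hc.ne']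
            have h4 : c⁻¹ = (2/δ) * ‖x‖ := by
              rw [hcdef]; rw [inv_div]; ring
            have h5 : ‖(A k) x‖ ^ t = ((2/δ) * ‖x‖)^t * ‖(A k) y‖^t := by
              rw [h3, h4, ← Real.mul_rpow (by positivity) (norm_nonneg _)]
            have h6 : ‖(A k) y‖ ^ t ≤ 2^t * (‖(A k) (x₀+y)‖^t + ‖(A k) x₀‖^t) :=
              le_trans (Real.rpow_le_rpow (norm_nonneg _) h2 ht0.le)
                (aux_add_rpow_le ht0.le (norm_nonneg _) (norm_nonneg _))
            rw [h5, Real.mul_rpow (by positivity) (norm_nonneg x)]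
            exact mul_le_mul_of_nonneg_left h6 (by positivity)
          calc ∑ k ∈ Finset.range N, ‖(A k) x‖ ^ t
              ≤ ∑ k ∈ Finset.range N,
                (2/δ)^t * ‖x‖^t * (2^t * (‖(A k) (x₀+y)‖^t + ‖(A k) x₀‖^t)) :=
                Finset.sum_le_sum (fun k _ => hpt k)
            _ = (2/δ)^t * ‖x‖^t * 2^t *
                ((∑ k ∈ Finset.range N, ‖(A k) (x₀+y)‖^t) +
                  ∑ k ∈ Finset.range N, ‖(A k) x₀‖^t) := by
                rw [← Finset.mul_sum, ← Finset.mul_sum, Finset.sum_add_distrib]; ring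
            _ ≤ (2/δ)^t * ‖x‖^t * 2^t * (n + n) := by
                refine mul_le_mul_of_nonneg_left ?_ (by positivity)
                exact add_le_add (hzE N) (hx₀E N)
            _ = B * ‖x‖^t := by rw [hBdef]; ring
      have hq1' : (1:ℝ≥0∞)/p₀ < 1/q := by
        rw [one_div, one_div]; exact ENNReal.inv_lt_inv.2 hq2
      rw [hr₀] at hq1'
      have hqofreal : (1:ℝ≥0∞)/q = ENNReal.ofReal (1/t) := by
        rw [one_div, one_div, htdef, ENNReal.ofReal_inv_of_pos ht0,
          ENNReal.ofReal_toReal hqt]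
      have hofsub : (1:ℝ≥0∞) - 1/ENNReal.ofReal ρ = ENNReal.ofReal (1 - 1/ρ) := by
        rw [ENNReal.ofReal_sub _ (by positivity), ENNReal.ofReal_one, one_div, one_div,
          ENNReal.ofReal_inv_of_pos hρ0]
      have hu : 0 < 1/t - (1 - 1/ρ) := by
        have h7 : ENNReal.ofReal (1 - 1/ρ) < ENNReal.ofReal (1/t) := by
          rw [← hofsub, ← hqofreal]
          exact lt_of_le_of_lt le_self_add hq1'
        have h8 := (ENNReal.ofReal_lt_ofReal_iff (by positivity)).1 h7
        linarith [lt_of_le_of_lt (le_max_right (1 - 1/ρ) 0) (max_lt_iff.2 ⟨h8, by positivity⟩)]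
      set r : ℝ := (1/t - (1 - 1/ρ))⁻¹ with hrdef
      have hrpos : 0 < r := inv_pos.2 hu
      have hrr : 1 / r = 1/ρ + 1/t - 1 := by rw [hrdef, one_div, inv_inv]; ring
      set R : ℝ≥0∞ := ENNReal.ofReal r with hRdef
      have hRtoReal : R.toReal = r := ENNReal.toReal_ofReal hrpos.le
      have hR1 : ENNReal.ofReal ρ ≤ R := by
        apply ENNReal.ofReal_le_ofReal
        have h8 : 1/t - (1 - 1/ρ) ≤ 1/ρ := by
          have h9 : 1/t ≤ 1 := by rw [div_le_one ht0]; linarith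
          linarith
        calc ρ = (1/ρ)⁻¹ := by rw [one_div, inv_inv]
          _ ≤ (1/t - (1 - 1/ρ))⁻¹ := inv_anti₀ hu h8
      have hR2 : R < r₀ := by
        have h9 : (1:ℝ≥0∞)/r₀ < ENNReal.ofReal (1/t) - ENNReal.ofReal (1 - 1/ρ) := by
          rw [← hqofreal, ← hofsub]
          exact (ENNReal.cancel_of_ne (by
            rw [hofsub]; exact ENNReal.ofReal_ne_top)).lt_tsub_iff_left.2 hq1'
        have hnn : (0:ℝ) ≤ 1 - 1/ρ := by
          have := (div_le_one hρ0).2 hρ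
          linarith
        have h10 : ENNReal.ofReal (1/t) - ENNReal.ofReal (1 - 1/ρ)
            = ENNReal.ofReal (1/t - (1 - 1/ρ)) := (ENNReal.ofReal_sub (1/t) hnn).symm
        have h11 : ENNReal.ofReal (1/t - (1 - 1/ρ)) = R⁻¹ := by
          rw [hRdef, ← ENNReal.ofReal_inv_of_pos hrpos, hrdef, inv_inv]
        rw [h10, h11, one_div] at h9
        exact ENNReal.inv_lt_inv.1 h9
      have hmem : Memℓp (fun k => ‖A k‖) R := by
        have hfin := aux_core A hρ hC hcot (fun k => aux_exists_norming (A k))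
          ht hB hbound hrpos hrr
        refine memℓp_gen' (C := 2 ^ r * (B ^ (1/t) / C) ^ r) ?_
        intro s
        obtain ⟨N, hsN⟩ := s.exists_nat_subset_range
        calc ∑ k ∈ s, ‖‖A k‖‖ ^ R.toReal = ∑ k ∈ s, ‖A k‖ ^ r := by
              rw [hRtoReal]
              exact Finset.sum_congr rfl fun k _ => by rw [norm_norm]
          _ ≤ ∑ k ∈ Finset.range N, ‖A k‖ ^ r :=
              Finset.sum_le_sum_of_subset_of_nonneg hsN
                (fun k _ _ => Real.rpow_nonneg (norm_nonneg _) r)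
          _ ≤ _ := hfin N
      exact hA R hR1 hR2 hmem
    · push_neg at hint
      have hdense : ∀ n, Dense (E n)ᶜ := by
        intro n
        rw [← interior_eq_empty_iff_dense_compl]
        exact hint n
      have hres : (⋂ n, (E n)ᶜ) ∈ residual X :=
        countable_iInter_mem.2 fun n =>
          residual_of_dense_open (hEclosed n).isOpen_compl (hdense n)
      refine Filter.mem_of_superset hres ?_
      intro x hx
      simp only [Set.mem_iInter, Set.mem_compl_iff] at hx
      intro hmem
      have hsum : Summable fun k => ‖(A k) x‖ ^ t := by
        have hs := (memℓp_gen_iff (p := q) (by rw [← htdef] at *; exact ht0)).1 hmem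
        simpa [norm_norm] using hs
      obtain ⟨n, hn⟩ := exists_nat_ge (∑' k, ‖(A k) x‖ ^ t)
      refine hx n (fun N => ?_)
      calc ∑ k ∈ Finset.range N, ‖(A k) x‖ ^ t ≤ ∑' k, ‖(A k) x‖ ^ t :=
            Summable.sum_le_tsum _ (fun k _ => Real.rpow_nonneg (norm_nonneg _) t) hsum
        _ ≤ n := hn
  set P : ℚ → Prop := fun s => 1 < ((s:ℝ).toNNReal : ℝ≥0∞) ∧
    ((s:ℝ).toNNReal : ℝ≥0∞) < p₀ with hPdef
  set G : ℚ → Set X := fun s => if h : P s then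
    {x : X | ¬ Memℓp (fun k => ‖(A k) x‖) ((s:ℝ).toNNReal : ℝ≥0∞)} else Set.univ
    with hGdef
  have hG : ∀ s, G s ∈ residual X := by
    intro s
    rw [hGdef]; dsimp only
    split_ifs with h
    · exact key _ h.1 h.2 ENNReal.coe_ne_top
    · exact Filter.univ_mem
  have hT : (⋂ s, G s) ∈ residual X := countable_iInter_mem.2 hG
  refine dense_of_mem_residual (Filter.mem_of_superset hT ?_)
  intro x hx p hp1 hp2
  obtain ⟨s, hs0, hs1, hs2⟩ := ENNReal.lt_iff_exists_rat_btwn.1 hp2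
  have hP : P s := ⟨lt_of_le_of_lt hp1 hs1, hs2⟩
  have hxs := Set.mem_iInter.1 hx s
  rw [hGdef] at hxs; dsimp only at hxs; rw [dif_pos hP] at hxs
  intro hmem
  exact hxs (hmem.of_exponent_ge hs1.le)
end
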